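/- In any compactification αX of X = [0,∞): if K is a closed subset of αX containing 0 and some z ∈ αX \ X, and t ∈ X with t ∉ K, then K ∩ [0,t) is a nonempty proper subset of K that is both closed and open in K; hence K is disconnected. -/

import Mathlib

theorem stmt14 {A : Type*} [TopologicalSpace A] [CompactSpace A] [T2Space A]
    (e : {x : ℝ // 0 ≤ x} → A)
    (he : Topology.IsEmbedding e) (hdense : DenseRange e)
    (K : Set A) (hK : IsClosed K)
    (h0 : e ⟨0, le_refl 0⟩ ∈ K)
    (z : A) (hzK : z ∈ K) (hz : z ∉ Set.range e)
    (t : {x : ℝ // 0 ≤ x}) (ht : e t ∉ K) :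
    (K ∩ e '' {s | s.1 < t.1}).Nonempty ∧
    K ∩ e '' {s | s.1 < t.1} ≠ K ∧
    IsClopen (Subtype.val ⁻¹' (e '' {s | s.1 < t.1}) : Set K) ∧
    ¬ IsPreconnected K := by
  set L : Set {x : ℝ // 0 ≤ x} := {s | s.1 < t.1} with hL
  set G : Set {x : ℝ // 0 ≤ x} := {s | t.1 ≤ s.1} with hG
  set S : Set {x : ℝ // 0 ≤ x} := {s | s.1 ≤ t.1} with hS
  have einj : Function.Injective e := he.injective
  have hLS : L ⊆ S := fun s (hs : s.1 < t.1) => (le_of_lt hs : s.1 ≤ t.1)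
  -- S is compact
  have hSval : S = Subtype.val ⁻¹' (Set.Icc 0 t.1) := by
    ext s; simp [hS, Set.mem_Icc, s.2]
  have hScomp : IsCompact S := by
    rw [hSval]
    exact (Topology.IsClosedEmbedding.subtypeVal isClosed_Ici).isCompact_preimage isCompact_Icc
  have heSclosed : IsClosed (e '' S) := (hScomp.image he.continuous).isClosed
  -- membership versions of the two descriptions
  have mem_closed : ∀ x ∈ K, (x ∈ e '' L ↔ x ∈ e '' S) := by
    intro x hx
    constructor
    · rintro ⟨s, hsL, rfl⟩; exact ⟨s, hLS hsL, rfl⟩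
    · rintro ⟨s, hsS, rfl⟩
      refine ⟨s, ?_, rfl⟩
      rcases lt_or_eq_of_le (show s.1 ≤ t.1 from hsS) with h | h
      · exact h
      · exact absurd hx (by rwa [show s = t from Subtype.ext h])
  have hLopen : IsOpen L := isOpen_Iio.preimage continuous_subtype_val
  have hdisj : ∀ x ∈ e '' L, x ∉ closure (e '' G) := by
    rintro x ⟨s, hsL, rfl⟩ hcl
    obtain ⟨U, hUopen, hUpre⟩ := he.isInducing.isOpen_iff.mp hLopen
    have hsU : e s ∈ U := by rw [← hUpre] at hsL; exact hsL
    obtain ⟨y, hyU, g, hgG, rfl⟩ := mem_closure_iff.mp hcl U hUopen hsU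
    have hgL : g ∈ L := by rw [← hUpre]; exact hyU
    exact absurd (lt_of_lt_of_le (hgL : g.1 < t.1) (show t.1 ≤ g.1 from hgG)) (lt_irrefl _)
  have mem_open : ∀ x ∈ K, (x ∈ e '' L ↔ x ∈ (closure (e '' G))ᶜ) := by
    intro x hx
    constructor
    · intro hxL; exact hdisj x hxL
    · intro hxW
      have hLG : L ∪ G = Set.univ := by
        ext s
        simp only [Set.mem_union, Set.mem_univ, iff_true, hL, hG, Set.mem_setOf_eq]
        exact lt_or_ge s.1 t.1
      have hxA : x ∈ closure (e '' L ∪ e '' G) := by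
        rw [← Set.image_union, hLG, Set.image_univ, hdense.closure_range]
        trivial
      have : x ∈ closure (e '' L) ∪ closure (e '' G) := by
        rw [← closure_union]; exact hxA
      rcases this with h | h
      · have hxS : x ∈ e '' S := closure_minimal (Set.image_mono hLS) heSclosed h
        exact (mem_closed x hx).mpr hxS
      · exact absurd h hxW
  -- nonempty
  have h0L : e ⟨0, le_refl 0⟩ ∈ e '' L := by
    refine ⟨⟨0, le_refl 0⟩, ?_, rfl⟩
    show (0 : ℝ) < t.1
    rcases lt_or_eq_of_le t.2 with h | h
    · exact h
    · exact absurd h0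
        (by rwa [show t = (⟨0, le_refl 0⟩ : {x : ℝ // 0 ≤ x}) from Subtype.ext h.symm] at ht)
  have hne : (K ∩ e '' L).Nonempty := ⟨e ⟨0, le_refl 0⟩, h0, h0L⟩
  have hzL : z ∉ e '' L := fun h => hz (Set.image_subset_range _ _ h)
  have hproper : K ∩ e '' L ≠ K := by
    intro h
    have : z ∈ K ∩ e '' L := h.symm ▸ hzK
    exact hzL this.2
  -- clopen in K
  have hclopen : IsClopen (Subtype.val ⁻¹' (e '' L) : Set K) := by
    constructor
    · have heq : (Subtype.val ⁻¹' (e '' L) : Set K) = Subtype.val ⁻¹' (e '' S) := by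
        ext k
        exact mem_closed k.1 k.2
      rw [heq]
      exact heSclosed.preimage continuous_subtype_val
    · have heq : (Subtype.val ⁻¹' (e '' L) : Set K) = Subtype.val ⁻¹' (closure (e '' G))ᶜ := by
        ext k
        exact mem_open k.1 k.2
      rw [heq]
      exact isClosed_closure.isOpen_compl.preimage continuous_subtype_val
  refine ⟨hne, hproper, hclopen, ?_⟩
  intro hpre
  have : PreconnectedSpace K := Subtype.preconnectedSpace hpre
  rcases isClopen_iff.mp hclopen with h | h
  · have : (⟨e ⟨0, le_refl 0⟩, h0⟩ : K) ∈ (Subtype.val ⁻¹' (e '' L) : Set K) := h0L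
    rw [h] at this
    exact this
  · have : (⟨z, hzK⟩ : K) ∈ (Subtype.val ⁻¹' (e '' L) : Set K) := by
      rw [h]; trivial
    exact hzL this
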